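/- Let n ≥ 1, j, k ∈ {1, …, n}, α ∈ (0,1], p_j, p_k > 0, H ≥ 0, and let h : ℝ^n → ℝ be twice continuously differentiable with h(x + p_j·e_j) = h(x) and h(x + p_k·e_k) = h(x) for all x ∈ ℝ^n. Suppose that |∂_j∂_k h(x + s·e_j) − ∂_j∂_k h(x)| ≤ H·|s|^α and |∂_j∂_k h(x + s·e_k) − ∂_j∂_k h(x)| ≤ H·|s|^α for all x ∈ ℝ^n and s ∈ ℝ. Then |∂_j∂_k h(x)| ≤ min(p_j, p_k)^α·H for all x ∈ ℝ^n. -/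

import Mathlib

/-- fderiv of a periodic function is periodic. -/
lemma fderiv_periodic {E F : Type*} [NormedAddCommGroup E] [NormedSpace ℝ E]
    [NormedAddCommGroup F] [NormedSpace ℝ F]
    (h : E → F) (hh : Differentiable ℝ h) (c : E) (hper : ∀ x, h (x + c) = h x) (x : E) :
    fderiv ℝ h (x + c) = fderiv ℝ h x := by
  have h1 : HasFDerivAt (fun y => h (y + c)) (fderiv ℝ h (x + c)) x := by
    have := (hh (x + c)).hasFDerivAt.comp x ((hasFDerivAt_id x).add_const c)
    exact this
  have h2 : (fun y => h (y + c)) = h := funext hper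
  rw [h2] at h1
  exact (h1.fderiv).symm

lemma key {n : ℕ} (h : (Fin n → ℝ) → ℝ) (hh : ContDiff ℝ 2 h) (v w : Fin n → ℝ)
    (α p H : ℝ) (hα : 0 < α) (hp : 0 < p) (hH : 0 ≤ H)
    (hper : ∀ x, h (x + p • w) = h x)
    (D : (Fin n → ℝ) → ℝ)
    (hD : ∀ y, D y = fderiv ℝ (fun z => fderiv ℝ h z v) y w)
    (hHol : ∀ x s, |D (x + s • w) - D x| ≤ H * |s| ^ α)
    (x : Fin n → ℝ) : |D x| ≤ p ^ α * H := by
  have hdiff : Differentiable ℝ (fderiv ℝ h) :=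
    (hh.fderiv_right (m := 1) (le_refl 2)).differentiable one_ne_zero
  set F : (Fin n → ℝ) → ℝ := fun y => fderiv ℝ h y v with hFdef
  have hF : Differentiable ℝ F := hdiff.clm_apply (differentiable_const v)
  set G : ℝ → ℝ := fun s => F (x + s • w) with hGdef
  have hG : ∀ s : ℝ, HasDerivAt G (D (x + s • w)) s := by
    intro s
    have hc : HasDerivAt (fun s : ℝ => x + s • w) w s := by
      simpa using ((hasDerivAt_id s).smul_const w).const_add x
    have := ((hF (x + s • w)).hasFDerivAt).comp_hasDerivAt s hc
    rw [hD]
    exact this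
  have hGper : G 0 = G p := by
    simp only [hGdef, hFdef, zero_smul, add_zero]
    rw [fderiv_periodic h (hh.differentiable two_ne_zero) (p • w) hper x]
  obtain ⟨c, hc, hc0⟩ := exists_hasDerivAt_eq_zero hp
    (fun s _ => (hG s).continuousAt.continuousWithinAt) hGper (fun s _ => hG s)
  have hzero : D (x + c • w) = 0 := hc0
  have h1 : |D x| ≤ H * |c| ^ α := by
    have := hHol x c
    rw [hzero] at this
    simpa [abs_sub_comm] using this
  have h2 : |c| ^ α ≤ p ^ α := by
    apply Real.rpow_le_rpow (abs_nonneg c) _ hα.le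
    rw [abs_of_pos hc.1]
    exact hc.2.le
  calc |D x| ≤ H * |c| ^ α := h1
    _ ≤ H * p ^ α := by nlinarith [Real.rpow_nonneg (abs_nonneg c) α]
    _ = p ^ α * H := mul_comm _ _

lemma sp_swap {n : ℕ} (h : (Fin n → ℝ) → ℝ) (hh : ContDiff ℝ 2 h) (v w : Fin n → ℝ)
    (x : Fin n → ℝ) :
    fderiv ℝ (fun y => fderiv ℝ h y v) x w = fderiv ℝ (fun y => fderiv ℝ h y w) x v := by
  have hdiff : Differentiable ℝ (fderiv ℝ h) :=
    (hh.fderiv_right (m := 1) (le_refl 2)).differentiable one_ne_zero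
  have hA : HasFDerivAt (fderiv ℝ h) (fderiv ℝ (fderiv ℝ h) x) x := (hdiff x).hasFDerivAt
  have e : ∀ u : Fin n → ℝ, fderiv ℝ (fun y => fderiv ℝ h y u) x =
      (ContinuousLinearMap.apply ℝ ℝ u).comp (fderiv ℝ (fderiv ℝ h) x) := by
    intro u
    have h1 := ((ContinuousLinearMap.apply ℝ ℝ u).hasFDerivAt
      (x := fderiv ℝ h x)).comp x hA
    have h2 : HasFDerivAt (fun y => fderiv ℝ h y u)
        ((ContinuousLinearMap.apply ℝ ℝ u).comp (fderiv ℝ (fderiv ℝ h) x)) x := h1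
    exact h2.fderiv
  rw [e v, e w]
  simp only [ContinuousLinearMap.coe_comp', Function.comp_apply,
    ContinuousLinearMap.apply_apply]
  exact second_derivative_symmetric
    (fun y => (hh.differentiable two_ne_zero y).hasFDerivAt) hA w v



/-- The second partial derivative `∂_j ∂_k h` of `h : ℝⁿ → ℝ`, expressed via
Fréchet derivatives applied to the standard basis vectors. -/
noncomputable def secondPartial (n : ℕ) (h : (Fin n → ℝ) → ℝ) (j k : Fin n)
    (x : Fin n → ℝ) : ℝ :=
  fderiv ℝ (fun y => fderiv ℝ h y (Pi.single k 1)) x (Pi.single j 1)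

/-- Let `h : ℝⁿ → ℝ` be `C²`, periodic with period `pj > 0` in the
`j`-th coordinate and `pk > 0` in the `k`-th coordinate, and suppose the mixed second
partial `∂_j ∂_k h` satisfies the directional Hölder estimates
`|∂_j∂_k h(x + s·e_j) − ∂_j∂_k h(x)| ≤ H·|s|^α` and
`|∂_j∂_k h(x + s·e_k) − ∂_j∂_k h(x)| ≤ H·|s|^α` for all `x, s`. Then
`|∂_j∂_k h(x)| ≤ min(pj, pk)^α · H` for all `x`. -/
theorem stmt_13 (n : ℕ) (hn : 1 ≤ n) (j k : Fin n) (α pj pk H : ℝ)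
    (hα : 0 < α) (hα1 : α ≤ 1) (hpj : 0 < pj) (hpk : 0 < pk) (hH : 0 ≤ H)
    (h : (Fin n → ℝ) → ℝ) (hh : ContDiff ℝ 2 h)
    (hperj : ∀ x : Fin n → ℝ, h (x + pj • (Pi.single j 1 : Fin n → ℝ)) = h x)
    (hperk : ∀ x : Fin n → ℝ, h (x + pk • (Pi.single k 1 : Fin n → ℝ)) = h x)
    (hHj : ∀ (x : Fin n → ℝ) (s : ℝ),
      |secondPartial n h j k (x + s • (Pi.single j 1 : Fin n → ℝ)) - secondPartial n h j k x| ≤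
        H * |s| ^ α)
    (hHk : ∀ (x : Fin n → ℝ) (s : ℝ),
      |secondPartial n h j k (x + s • (Pi.single k 1 : Fin n → ℝ)) - secondPartial n h j k x| ≤
        H * |s| ^ α) :
    ∀ x : Fin n → ℝ, |secondPartial n h j k x| ≤ min pj pk ^ α * H := by
  intro x
  have hswap : ∀ y, secondPartial n h j k y =
      fderiv ℝ (fun z => fderiv ℝ h z (Pi.single j 1)) y (Pi.single k 1) :=
    fun y => sp_swap h hh _ _ y
  have b1 := key h hh (Pi.single k 1) (Pi.single j 1) α pj H hα hpj hH hperj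
    (secondPartial n h j k) (fun _ => rfl) hHj x
  have b2 := key h hh (Pi.single j 1) (Pi.single k 1) α pk H hα hpk hH hperk
    (secondPartial n h j k) hswap hHk x
  rcases le_total pj pk with hle | hle
  · rw [min_eq_left hle]; exact b1
  · rw [min_eq_right hle]; exact b2
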